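/- (Barycentric weight update when new data is introduced at a point ζ ≠ z_k.) Let z_k, ζ ∈ ℂ with ζ ≠ z_k, let n_k ≥ 1, and let W_k(z) = Σ_{r=0}^{n_k−1} w_{k,r}(z − z_k)^r be a polynomial of degree at most n_k − 1. Define w'_{k,0} = w_{k,0}/(z_k − ζ) and w'_{k,r} = (w_{k,r} − w'_{k,r−1})/(z_k − ζ) for 1 ≤ r ≤ n_k − 1, and set W'_k(z) = Σ_{r=0}^{n_k−1} w'_{k,r}(z − z_k)^r. Then W'_k is the unique polynomial of degree at most n_k − 1 with (X − z_k)^{n_k} dividing (X − ζ)·W'_k − W_k. Consequently, if P ∈ ℂ[X] satisfies (X − z_k)^{n_k} | P·W_k − 1, then (X − z_k)^{n_k} | P·(X − ζ)·W'_k − 1; i.e., the updated weights w'_{k,r} are the barycentric weights for the prefactor P(z)(z − ζ). -/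

import Mathlib

open Polynomial Finset

/-- Barycentric weight update when new data is introduced at a point `ζ ≠ z_k`.
With `w' 0 = w 0 / (z_k - ζ)` and `w' r = (w r - w' (r-1))/(z_k - ζ)` for
`1 ≤ r ≤ n_k - 1`, the polynomial `W' = ∑_{r < n_k} w' r (X - z_k)^r` is the
unique polynomial of degree at most `n_k - 1` with
`(X - z_k)^(n_k) ∣ (X - ζ)·W' - W`.  Consequently, if
`(X - z_k)^(n_k) ∣ P·W - 1` then `(X - z_k)^(n_k) ∣ P·(X - ζ)·W' - 1`, i.e. the
updated weights are the barycentric weights for the prefactor `P(z)(z - ζ)`. -/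
theorem barycentric_weight_update
    (zk ζ : ℂ) (hne : ζ ≠ zk) (nk : ℕ) (hnk : 1 ≤ nk)
    (w w' : ℕ → ℂ)
    (hw'0 : w' 0 = w 0 / (zk - ζ))
    (hw' : ∀ r : ℕ, 1 ≤ r → r ≤ nk - 1 → w' r = (w r - w' (r - 1)) / (zk - ζ)) :
    ((X - C zk) ^ nk ∣
        (X - C ζ) * (∑ r ∈ Finset.range nk, C (w' r) * (X - C zk) ^ r) -
          (∑ r ∈ Finset.range nk, C (w r) * (X - C zk) ^ r) ∧
      ∀ V : Polynomial ℂ, V.degree < (nk : WithBot ℕ) →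
        (X - C zk) ^ nk ∣
          (X - C ζ) * V - (∑ r ∈ Finset.range nk, C (w r) * (X - C zk) ^ r) →
        V = ∑ r ∈ Finset.range nk, C (w' r) * (X - C zk) ^ r) ∧
    ∀ P : Polynomial ℂ,
      (X - C zk) ^ nk ∣ P * (∑ r ∈ Finset.range nk, C (w r) * (X - C zk) ^ r) - 1 →
      (X - C zk) ^ nk ∣
        P * (X - C ζ) * (∑ r ∈ Finset.range nk, C (w' r) * (X - C zk) ^ r) - 1 := by

  have hs : zk - ζ ≠ 0 := sub_ne_zero.mpr (fun h => hne h.symm)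
  have hw0 : (zk - ζ) * w' 0 = w 0 := by
    rw [hw'0]; field_simp
  have hwr : ∀ r : ℕ, 1 ≤ r → r ≤ nk - 1 → (zk - ζ) * w' r = w r - w' (r - 1) := by
    intro r h1 h2
    rw [hw' r h1 h2]; field_simp
  obtain ⟨m, rfl⟩ : ∃ m, nk = m + 1 := ⟨nk - 1, (Nat.succ_pred_eq_of_pos hnk).symm⟩
  set W : Polynomial ℂ := ∑ r ∈ Finset.range (m + 1), C (w r) * (X - C zk) ^ r with hW
  set W' : Polynomial ℂ := ∑ r ∈ Finset.range (m + 1), C (w' r) * (X - C zk) ^ r with hW'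
  have key : (X - C ζ) * W' - W = C (w' m) * (X - C zk) ^ (m + 1) := by
    have hXζ : (X - C ζ) = (X - C zk) + C (zk - ζ) := by
      rw [C_sub]; ring
    have e1 : (X - C zk) * W' =
        (∑ r ∈ Finset.range m, C (w' r) * (X - C zk) ^ (r + 1)) +
          C (w' m) * (X - C zk) ^ (m + 1) := by
      rw [hW', Finset.mul_sum, Finset.sum_range_succ]
      congr 1
      · exact Finset.sum_congr rfl fun r _ => by ring
      · ring
    have e2 : C (zk - ζ) * W' - W =
        ∑ r ∈ Finset.range m, -(C (w' r) * (X - C zk) ^ (r + 1)) := by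
      rw [hW', hW, Finset.mul_sum, ← Finset.sum_sub_distrib, Finset.sum_range_succ']
      have h0 : C (zk - ζ) * (C (w' 0) * (X - C zk) ^ 0) - C (w 0) * (X - C zk) ^ 0 = 0 := by
        simp only [pow_zero, mul_one, ← C_mul, hw0, sub_self]
      rw [h0, add_zero]
      refine Finset.sum_congr rfl fun r hr => ?_
      have hr' : (zk - ζ) * w' (r + 1) = w (r + 1) - w' r := by
        have := hwr (r + 1) (Nat.le_add_left 1 r)
          (by simpa using Nat.succ_le_of_lt (Finset.mem_range.mp hr))
        simpa using this
      calc C (zk - ζ) * (C (w' (r + 1)) * (X - C zk) ^ (r + 1)) -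
            C (w (r + 1)) * (X - C zk) ^ (r + 1)
          = (C (zk - ζ) * C (w' (r + 1)) - C (w (r + 1))) * (X - C zk) ^ (r + 1) := by ring
        _ = -(C (w' r) * (X - C zk) ^ (r + 1)) := by
              rw [← C_mul, hr', C_sub]; ring
    calc (X - C ζ) * W' - W = (X - C zk) * W' + (C (zk - ζ) * W' - W) := by
          rw [hXζ]; ring
      _ = ((∑ r ∈ Finset.range m, C (w' r) * (X - C zk) ^ (r + 1)) +
            C (w' m) * (X - C zk) ^ (m + 1)) +
            ∑ r ∈ Finset.range m, -(C (w' r) * (X - C zk) ^ (r + 1)) := by rw [e1, e2]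
      _ = C (w' m) * (X - C zk) ^ (m + 1) := by
          rw [Finset.sum_neg_distrib]; ring
  have hdvd1 : (X - C zk) ^ (m + 1) ∣ (X - C ζ) * W' - W := ⟨C (w' m), by rw [key]; ring⟩
  have hdegW' : W'.degree < ((m + 1 : ℕ) : WithBot ℕ) := by
    rw [hW']
    apply lt_of_le_of_lt (Polynomial.degree_sum_le _ _)
    rw [Finset.sup_lt_iff (by exact_mod_cast WithBot.bot_lt_coe (m + 1))]
    intro r hr
    have h1 : ((X - C zk) ^ r).degree = (r : WithBot ℕ) := by
      rw [degree_pow, degree_X_sub_C]; simp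
    calc (C (w' r) * (X - C zk) ^ r).degree
        ≤ (C (w' r)).degree + ((X - C zk) ^ r).degree := degree_mul_le _ _
      _ ≤ 0 + (r : WithBot ℕ) := by rw [h1]; exact add_le_add_left (degree_C_le (a := w' r)) _
      _ = (r : WithBot ℕ) := zero_add _
      _ < ((m + 1 : ℕ) : WithBot ℕ) := by
          exact_mod_cast Finset.mem_range.mp hr
  refine ⟨⟨hdvd1, ?_⟩, ?_⟩
  · intro V hV hVd
    have hco : IsCoprime ((X - C ζ)) ((X - C zk) ^ (m + 1)) :=
      (Polynomial.isCoprime_X_sub_C_of_isUnit_sub (by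
        simpa using isUnit_iff_ne_zero.mpr (sub_ne_zero.mpr hne))).pow_right
    have hdvd2 : (X - C zk) ^ (m + 1) ∣ (X - C ζ) * (V - W') := by
      have : (X - C ζ) * (V - W') = ((X - C ζ) * V - W) - ((X - C ζ) * W' - W) := by ring
      rw [this]
      exact dvd_sub hVd hdvd1
    have hdvd3 : (X - C zk) ^ (m + 1) ∣ V - W' := hco.symm.dvd_of_dvd_mul_left hdvd2
    have hdeg : (V - W').degree < ((X - C zk) ^ (m + 1)).degree := by
      rw [degree_pow, degree_X_sub_C]
      have : ((m + 1) • (1 : WithBot ℕ)) = ((m + 1 : ℕ) : WithBot ℕ) := by simp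
      rw [this]
      exact lt_of_le_of_lt (degree_sub_le _ _) (max_lt hV hdegW')
    have : V - W' = 0 := Polynomial.eq_zero_of_dvd_of_degree_lt hdvd3 hdeg
    exact sub_eq_zero.mp this
  · intro P hP
    have : P * (X - C ζ) * W' - 1 = P * ((X - C ζ) * W' - W) + (P * W - 1) := by ring
    rw [this]
    exact dvd_add (hdvd1.mul_left P) hP
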